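/- Assume hypothesis (H1) holds, f(k,0) ≠ 0 for at least one k ∈ {1,...,T}, and p⁻ = q⁺ + 1. Then there exists λ* > 0 such that for every λ ∈ (0, λ*) problem (⋆) has at least one nontrivial solution. -/

import Mathlib

set_option maxHeartbeats 1000000
open Filter Set

noncomputable def Phi (P x : ℝ) : ℝ := |x| ^ P / P



lemma hasDerivAt_absPow {P : ℝ} (hP : 1 < P) (x : ℝ) :
    HasDerivAt (fun y : ℝ => |y| ^ P) (P * (|x| ^ (P - 2) * x)) x := by
  rcases lt_trichotomy x 0 with hx | hx | hx
  · have h := Real.hasDerivAt_rpow_const (x := -x) (p := P) (Or.inl (by linarith))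
    have h2 : HasDerivAt (fun y : ℝ => (-y) ^ P) (P * (-x) ^ (P - 1) * (-1)) x :=
      HasDerivAt.comp x h ((hasDerivAt_id x).neg)
    have heq : (fun y : ℝ => |y| ^ P) =ᶠ[nhds x] fun y : ℝ => (-y) ^ P := by
      filter_upwards [eventually_lt_nhds hx] with y hy
      rw [abs_of_neg hy]
    have := h2.congr_of_eventuallyEq heq
    refine this.congr_deriv ?_
    rw [abs_of_neg hx]
    have h3 : (-x) ^ (P - 1) = (-x) ^ (P - 2) * (-x) := by
      rw [← Real.rpow_add_one (by linarith : (-x) ≠ 0)]; ring_nf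
    rw [h3]; ring
  · subst hx
    have h0 : HasDerivAt (fun y : ℝ => |y| ^ P) 0 0 := by
      rw [hasDerivAt_iff_tendsto_slope]
      apply squeeze_zero_norm' (a := fun y : ℝ => |y| ^ (P - 1))
      · filter_upwards [self_mem_nhdsWithin] with y (hy : y ≠ 0)
        have hay : |y| ≠ 0 := abs_ne_zero.mpr hy
        have hs : slope (fun y : ℝ => |y| ^ P) 0 y = |y| ^ P / y := by
          simp [slope_def_field, Real.zero_rpow (by linarith : P ≠ 0)]

        rw [hs, Real.norm_eq_abs, abs_div, Real.abs_rpow_of_nonneg (abs_nonneg y), abs_abs]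
        rw [div_le_iff₀ (abs_pos.mpr hy), ← Real.rpow_add_one hay]
        ring_nf
        exact le_rfl
      · have hc : ContinuousAt (fun y : ℝ => |y| ^ (P - 1)) 0 := by
          have h1 : ContinuousAt (fun z : ℝ => z ^ (P - 1)) (|(0:ℝ)|) := by
            simpa using Real.continuousAt_rpow_const 0 (P - 1) (Or.inr (by linarith))
          exact h1.comp continuous_abs.continuousAt
        have h2 : Tendsto (fun y : ℝ => |y| ^ (P - 1)) (nhdsWithin 0 {(0:ℝ)}ᶜ) (nhds (|(0:ℝ)| ^ (P - 1))) :=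
          hc.tendsto.mono_left nhdsWithin_le_nhds
        simpa [Real.zero_rpow (by linarith : P - 1 ≠ 0)] using h2
    simpa using h0
  · have h := Real.hasDerivAt_rpow_const (x := x) (p := P) (Or.inl (ne_of_gt hx))
    have heq : (fun y : ℝ => |y| ^ P) =ᶠ[nhds x] fun y : ℝ => y ^ P := by
      filter_upwards [eventually_gt_nhds hx] with y hy
      rw [abs_of_pos hy]
    have := h.congr_of_eventuallyEq heq
    refine this.congr_deriv ?_
    rw [abs_of_pos hx]
    rw [show (P - 1) = (P - 2) + 1 by ring, Real.rpow_add_one (ne_of_gt hx)]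

lemma hasDerivAt_Phi {P : ℝ} (hP : 1 < P) (x : ℝ) :
    HasDerivAt (Phi P) (|x| ^ (P - 2) * x) x := by
  have h := (hasDerivAt_absPow hP x).div_const P
  have hP0 : P ≠ 0 := by linarith
  have : P * (|x| ^ (P - 2) * x) / P = |x| ^ (P - 2) * x := by field_simp
  rw [this] at h
  exact h

noncomputable def En (T : ℕ) (p : ℕ → ℝ) (f : ℕ → ℝ → ℝ) (lam : ℝ) (u : ℕ → ℝ) : ℝ :=
  (∑ j ∈ Finset.range (T + 1), Phi (p j) (u (j + 1) - u j))
    + lam * ∑ k ∈ Finset.Icc 1 T, ∫ s in (0:ℝ)..(u k), f k s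



/-- `u` is a solution of problem (⋆) with parameter `lam`:
`u(0) = u(T+1) = 0` and
`|Δu(k)|^{p(k)−2}Δu(k) − |Δu(k−1)|^{p(k−1)−2}Δu(k−1) = λ·f(k,u(k))` for `k ∈ {1,…,T}`. -/
def IsSolution (T : ℕ) (p : ℕ → ℝ) (f : ℕ → ℝ → ℝ) (lam : ℝ) (u : ℕ → ℝ) : Prop :=
  u 0 = 0 ∧ u (T + 1) = 0 ∧ ∀ k, 1 ≤ k → k ≤ T →
    |u (k + 1) - u k| ^ (p k - 2) * (u (k + 1) - u k)
      - |u k - u (k - 1)| ^ (p (k - 1) - 2) * (u k - u (k - 1)) = lam * f k (u k)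

/-- `u` is nontrivial: it is not identically zero. -/
def Nontrivial' (T : ℕ) (u : ℕ → ℝ) : Prop :=
  ∃ k, 1 ≤ k ∧ k ≤ T ∧ u k ≠ 0

theorem stmt7 (T : ℕ) (hT : 1 ≤ T) (p : ℕ → ℝ) (hp : ∀ k ≤ T + 1, 1 < p k)
    (q : ℕ → ℝ) (hq : ∀ k, 1 ≤ k → k ≤ T → 0 < q k)
    (pm : ℝ) (hpm : IsLeast (p '' Set.Icc 0 (T + 1)) pm)
    (qp : ℝ) (hqp : IsGreatest (q '' Set.Icc 1 T) qp)
    (f : ℕ → ℝ → ℝ) (hf : ∀ k, 1 ≤ k → k ≤ T → Continuous (f k))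
    -- Hypothesis (H1)
    (a b : ℕ → ℝ) (ha : ∀ k, 1 ≤ k → k ≤ T → 0 < a k)
    (hH1 : ∀ k, 1 ≤ k → k ≤ T → ∀ t : ℝ, |f k t| ≤ a k * |t| ^ q k + b k)
    (hf0 : ∃ k, 1 ≤ k ∧ k ≤ T ∧ f k 0 ≠ 0)
    (hpq : pm = qp + 1) :
    ∃ lamStar > (0:ℝ), ∀ lam : ℝ, 0 < lam → lam < lamStar →
      ∃ u : ℕ → ℝ, IsSolution T p f lam u ∧ Nontrivial' T u := by
  classical
  set R : ℝ := (T : ℝ) + 1 with hRdef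
  have hR1 : (1 : ℝ) ≤ R := by
    rw [hRdef]; have : (0:ℝ) ≤ (T:ℝ) := Nat.cast_nonneg T; linarith
  have hRpos : (0 : ℝ) < R := by linarith
  set C : ℝ := ∑ k ∈ Finset.Icc 1 T, (a k * R ^ q k + |b k|) * R with hCdef
  have hC : 0 < C := by
    apply Finset.sum_pos
    · intro k hk
      obtain ⟨hk1, hkT⟩ := Finset.mem_Icc.mp hk
      have := ha k hk1 hkT
      have hr : (0:ℝ) < R ^ q k := Real.rpow_pos_of_pos hRpos _
      positivity
    · exact ⟨1, Finset.mem_Icc.mpr ⟨le_refl 1, hT⟩⟩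
  set pplus : ℝ := (Finset.range (T + 2)).sup' ⟨0, by simp⟩ p with hppdef
  have hple : ∀ j ≤ T + 1, p j ≤ pplus := by
    intro j hj
    exact Finset.le_sup' p (Finset.mem_range.mpr (by omega))
  have hpplus : 0 < pplus := lt_of_lt_of_le (by linarith [hp 0 (by omega)]) (hple 0 (by omega))
  set lamStar : ℝ := 1 / (pplus * C) with hlamStar
  have hlamStarPos : 0 < lamStar := by
    rw [hlamStar]
    positivity
  refine ⟨lamStar, hlamStarPos, ?_⟩
  intro lam hlam hlamlt
  -- the compact set
  set K : ℕ → Set ℝ := fun k => if 1 ≤ k ∧ k ≤ T then Icc (-R) R else {0} with hKdef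
  set S : Set (ℕ → ℝ) := Set.univ.pi K with hSdef
  have hSc : IsCompact S := by
    apply isCompact_univ_pi
    intro k
    rw [hKdef]
    dsimp only
    split
    · exact isCompact_Icc
    · exact isCompact_singleton
  have hzeroS : (fun _ : ℕ => (0:ℝ)) ∈ S := by
    intro k _
    rw [hKdef]
    dsimp only
    split
    · exact ⟨by linarith, by linarith⟩
    · rfl
  -- continuity
  have hEcont : Continuous (En T p f lam) := by
    apply Continuous.add
    · apply continuous_finset_sum
      intro j hj
      have hj' : j ≤ T := by simpa [Nat.lt_succ_iff] using Finset.mem_range.mp hj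
      have hpj : (0:ℝ) ≤ p j := by linarith [hp j (by omega)]
      have h1 : Continuous fun x : ℝ => |x| ^ (p j) := by
        rw [continuous_iff_continuousAt]
        intro x
        have h2 : ContinuousAt (fun z : ℝ => z ^ (p j)) (|x|) :=
          Real.continuousAt_rpow_const _ _ (Or.inr hpj)
        exact h2.comp continuous_abs.continuousAt
      exact (h1.comp ((continuous_apply (j + 1)).sub (continuous_apply j))).div_const _
    · apply Continuous.mul continuous_const
      apply continuous_finset_sum
      intro k hk
      obtain ⟨hk1, hkT⟩ := Finset.mem_Icc.mp hk
      exact (intervalIntegral.continuous_primitive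
        (fun c d => ((hf k hk1 hkT).intervalIntegrable c d)) 0).comp (continuous_apply k)
  -- minimizer
  obtain ⟨u, huS, hmin⟩ := hSc.exists_isMinOn ⟨_, hzeroS⟩ hEcont.continuousOn
  have hu0 : u 0 = 0 := by
    have := huS 0 (Set.mem_univ 0)
    rw [hKdef] at this
    simpa using this
  have huT1 : u (T + 1) = 0 := by
    have := huS (T+1) (Set.mem_univ (T + 1))
    rw [hKdef] at this
    simp only [show ¬(1 ≤ T + 1 ∧ T + 1 ≤ T) by omega, if_neg] at this
    · simpa using this
  have hub : ∀ k, 1 ≤ k → k ≤ T → |u k| ≤ R := by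
    intro k hk1 hkT
    have := huS k (Set.mem_univ k)
    rw [hKdef] at this
    simp only [show (1 ≤ k ∧ k ≤ T) = True by simp [hk1, hkT], if_true] at this
    rw [abs_le]
    simpa using this
  -- E(0) = 0
  have hE0 : En T p f lam (fun _ => 0) = 0 := by
    rw [En]
    have h1 : ∀ j ∈ Finset.range (T + 1), Phi (p j) ((0:ℝ) - 0) = 0 := by
      intro j hj
      have hj' : j ≤ T := by simpa [Nat.lt_succ_iff] using Finset.mem_range.mp hj
      have : p j ≠ 0 := by linarith [hp j (by omega)]
      simp [Phi, Real.zero_rpow this]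
    rw [Finset.sum_congr rfl h1]
    simp
  have hmin0 : En T p f lam u ≤ 0 := by
    rw [← hE0]
    exact hmin hzeroS
  -- bound on F terms for |t| ≤ R
  have hFb : ∀ k, 1 ≤ k → k ≤ T → ∀ t : ℝ, |t| ≤ R →
      |∫ s in (0:ℝ)..t, f k s| ≤ (a k * R ^ q k + |b k|) * R := by
    intro k hk1 hkT t ht
    have hbound : ∀ s ∈ Set.uIoc (0:ℝ) t, ‖f k s‖ ≤ a k * R ^ q k + |b k| := by
      intro s hs
      have hsle : |s| ≤ R := by
        rw [Set.mem_uIoc] at hs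
        rcases hs with ⟨h1, h2⟩ | ⟨h1, h2⟩ <;>
          (rw [abs_le]; constructor <;> [nlinarith [abs_nonneg t, le_abs_self t, neg_abs_le t];
            nlinarith [abs_nonneg t, le_abs_self t, neg_abs_le t]])
      calc ‖f k s‖ = |f k s| := rfl
        _ ≤ a k * |s| ^ q k + b k := hH1 k hk1 hkT s
        _ ≤ a k * R ^ q k + |b k| := by
            have h1 : |s| ^ q k ≤ R ^ q k :=
              Real.rpow_le_rpow (abs_nonneg s) hsle (hq k hk1 hkT).le
            have h2 : b k ≤ |b k| := le_abs_self _
            have h3 := (ha k hk1 hkT).le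
            nlinarith
    have := intervalIntegral.norm_integral_le_of_norm_le_const hbound
    calc |∫ s in (0:ℝ)..t, f k s| ≤ (a k * R ^ q k + |b k|) * |t - 0| := this
      _ ≤ (a k * R ^ q k + |b k|) * R := by
          have h3 := (ha k hk1 hkT).le
          have hr : (0:ℝ) ≤ R ^ q k := (Real.rpow_pos_of_pos hRpos _).le
          have : |t - 0| = |t| := by ring_nf
          rw [this]
          have hb := abs_nonneg (b k)
          exact mul_le_mul_of_nonneg_left ht (add_nonneg (mul_nonneg h3 hr) hb)
  have hFsum : |∑ k ∈ Finset.Icc 1 T, ∫ s in (0:ℝ)..(u k), f k s| ≤ C := by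
    calc |∑ k ∈ Finset.Icc 1 T, ∫ s in (0:ℝ)..(u k), f k s|
        ≤ ∑ k ∈ Finset.Icc 1 T, |∫ s in (0:ℝ)..(u k), f k s| := Finset.abs_sum_le_sum_abs _ _
      _ ≤ C := by
          rw [hCdef]
          apply Finset.sum_le_sum
          intro k hk
          obtain ⟨hk1, hkT⟩ := Finset.mem_Icc.mp hk
          exact hFb k hk1 hkT (u k) (hub k hk1 hkT)
  -- assume lam small
  have hlamsmall : lam * C < 1 / pplus := by
    have h1 : lam * C < lamStar * C := mul_lt_mul_of_pos_right hlamlt hC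
    have h2 : lamStar * C = 1 / pplus := by
      rw [hlamStar]
      field_simp
    linarith
  -- interior claim
  have hint : ∀ k, 1 ≤ k → k ≤ T → |u k| < R := by
    by_contra hcon
    push_neg at hcon
    obtain ⟨m, hm1, hmT, hmR⟩ := hcon
    -- find a large difference
    have hjump : ∃ j, j < m ∧ 1 ≤ |u (j + 1) - u j| := by
      by_contra hall
      push_neg at hall
      have htel : ∑ j ∈ Finset.range m, (u (j + 1) - u j) = u m - u 0 :=
        Finset.sum_range_sub u m
      have h1 : |u m| ≤ ∑ j ∈ Finset.range m, |u (j + 1) - u j| := by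
        rw [hu0, sub_zero] at htel
        rw [← htel]
        exact Finset.abs_sum_le_sum_abs _ _
      have h2 : ∑ j ∈ Finset.range m, |u (j + 1) - u j| < ∑ _j ∈ Finset.range m, (1:ℝ) := by
        apply Finset.sum_lt_sum_of_nonempty
        · exact Finset.nonempty_range_iff.mpr (by omega)
        · intro j hj
          exact hall j (Finset.mem_range.mp hj)
      rw [Finset.sum_const, Finset.card_range, nsmul_eq_mul, mul_one] at h2
      have h3 : (m : ℝ) ≤ (T : ℝ) := Nat.cast_le.mpr hmT
      have h4 : R ≤ |u m| := hmR
      rw [hRdef] at h4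
      linarith
    obtain ⟨j, hjm, hjge⟩ := hjump
    have hjT : j ∈ Finset.range (T + 1) := Finset.mem_range.mpr (by omega)
    have hpj : 1 < p j := hp j (by omega)
    -- lower bound on Phi sum
    have hlow : 1 / pplus ≤ ∑ i ∈ Finset.range (T + 1), Phi (p i) (u (i + 1) - u i) := by
      have h1 : Phi (p j) (u (j + 1) - u j) ≤
          ∑ i ∈ Finset.range (T + 1), Phi (p i) (u (i + 1) - u i) := by
        apply Finset.single_le_sum (f := fun i => Phi (p i) (u (i + 1) - u i)) _ hjT
        intro i hi
        have hi' : i ≤ T := by simpa [Nat.lt_succ_iff] using Finset.mem_range.mp hi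
        exact div_nonneg (Real.rpow_nonneg (abs_nonneg _) _) (by linarith [hp i (by omega)])
      have h2 : 1 / pplus ≤ Phi (p j) (u (j + 1) - u j) := by
        rw [Phi]
        have hnum : (1:ℝ) ≤ |u (j + 1) - u j| ^ p j :=
          Real.one_le_rpow hjge (by linarith)
        calc 1 / pplus ≤ 1 / p j := by
              apply one_div_le_one_div_of_le (by linarith) (hple j (by omega))
          _ ≤ |u (j + 1) - u j| ^ p j / p j := by
              apply div_le_div_of_nonneg_right hnum (by linarith)
        
      linarith
    have hFlow : -(lam * C) ≤ lam * ∑ k ∈ Finset.Icc 1 T, ∫ s in (0:ℝ)..(u k), f k s := by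
      have h1 := (abs_le.mp hFsum).1
      have h2 := mul_le_mul_of_nonneg_left h1 hlam.le
      rw [mul_neg] at h2
      linarith
    have : (0:ℝ) < En T p f lam u := by
      rw [En]
      have := hlamsmall
      linarith
    linarith
  -- Euler-Lagrange equations
  have heqn : ∀ k, 1 ≤ k → k ≤ T →
      |u (k + 1) - u k| ^ (p k - 2) * (u (k + 1) - u k)
        - |u k - u (k - 1)| ^ (p (k - 1) - 2) * (u k - u (k - 1)) = lam * f k (u k) := by
    intro k hk1 hkT
    set X : ℝ := |u k - u (k - 1)| ^ (p (k - 1) - 2) * (u k - u (k - 1)) with hXdef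
    set Y : ℝ := -(|u (k + 1) - u k| ^ (p k - 2) * (u (k + 1) - u k)) with hYdef
    set g : ℝ → ℝ := fun t => En T p f lam (Function.update u k t) with hgdef
    -- local minimum at u k
    have hloc : IsLocalMin g (u k) := by
      have hmem : Icc (-R) R ∈ nhds (u k) := by
        have h := hint k hk1 hkT
        rw [abs_lt] at h
        exact Icc_mem_nhds h.1 h.2
      have hev : ∀ᶠ t in nhds (u k), g (u k) ≤ g t := by
        filter_upwards [hmem] with t ht
        have hupd : Function.update u k t ∈ S := by
          intro i _
          by_cases hik : i = k
          · subst hik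
            rw [Function.update_self, hKdef]
            simp only [show (1 ≤ i ∧ i ≤ T) from ⟨hk1, hkT⟩, if_pos, and_self]
            exact ht
          · rw [Function.update_of_ne hik]
            exact huS i (Set.mem_univ i)
        have hgu : g (u k) = En T p f lam u := by
          rw [hgdef]; simp only [Function.update_eq_self]
        rw [hgu]
        exact hmin hupd
      exact hev
    -- derivative of g at u k
    have hkm1 : k - 1 + 1 = k := by omega
    have hkne : k - 1 ≠ k := by omega
    have hD : HasDerivAt g (X + Y + lam * f k (u k)) (u k) := by
      have hsum1 : HasDerivAt (fun t => ∑ j ∈ Finset.range (T + 1),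
          Phi (p j) (Function.update u k t (j + 1) - Function.update u k t j))
          (X + Y) (u k) := by
        have hXY : X + Y = ∑ j ∈ Finset.range (T + 1),
            ((if j = k - 1 then X else 0) + (if j = k then Y else 0)) := by
          rw [Finset.sum_add_distrib, Finset.sum_ite_eq', Finset.sum_ite_eq']
          rw [if_pos (Finset.mem_range.mpr (by omega : k - 1 < T + 1)),
            if_pos (Finset.mem_range.mpr (by omega : k < T + 1))]
        rw [hXY]
        apply HasDerivAt.fun_sum
        intro j hj
        by_cases hj1 : j = k - 1
        · subst hj1
          rw [if_pos rfl, if_neg hkne, add_zero]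
          have hfeq : (fun t => Phi (p (k - 1))
              (Function.update u k t (k - 1 + 1) - Function.update u k t (k - 1)))
              = fun t => Phi (p (k - 1)) (t - u (k - 1)) := by
            funext t
            rw [hkm1, Function.update_self, Function.update_of_ne hkne]
          rw [hfeq]
          have hinner : HasDerivAt (fun t : ℝ => t - u (k - 1)) 1 (u k) :=
            (hasDerivAt_id (u k)).sub_const _
          have houter := hasDerivAt_Phi (hp (k - 1) (by omega)) (u k - u (k - 1))
          have := HasDerivAt.comp (u k) houter hinner
          exact this.congr_deriv (by simp [hXdef])
        · by_cases hj2 : j = k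
          · subst hj2
            rw [if_neg hj1, if_pos rfl, zero_add]
            have hfeq : (fun t => Phi (p j)
                (Function.update u j t (j + 1) - Function.update u j t j))
                = fun t => Phi (p j) (u (j + 1) - t) := by
              funext t
              rw [Function.update_self, Function.update_of_ne (by omega : j + 1 ≠ j)]
            rw [hfeq]
            have hinner : HasDerivAt (fun t : ℝ => u (j + 1) - t) (-1) (u j) := by
              simpa using (hasDerivAt_id (u j)).const_sub (u (j + 1))
            have houter := hasDerivAt_Phi (hp j (by omega)) (u (j + 1) - u j)
            have := HasDerivAt.comp (u j) houter hinner
            rw [hYdef]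
            exact this.congr_deriv (by ring)
          · rw [if_neg hj1, if_neg hj2, add_zero]
            have hfeq : (fun t => Phi (p j)
                (Function.update u k t (j + 1) - Function.update u k t j))
                = fun _ => Phi (p j) (u (j + 1) - u j) := by
              funext t
              rw [Function.update_of_ne (by omega : j + 1 ≠ k),
                Function.update_of_ne (by omega : j ≠ k)]
            rw [hfeq]
            exact hasDerivAt_const _ _
      have hsum2 : HasDerivAt (fun t => ∑ k' ∈ Finset.Icc 1 T,
          ∫ s in (0:ℝ)..(Function.update u k t k'), f k' s) (f k (u k)) (u k) := by
        have hval : f k (u k) = ∑ k' ∈ Finset.Icc 1 T,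
            (if k' = k then f k (u k) else 0) := by
          rw [Finset.sum_ite_eq', if_pos (Finset.mem_Icc.mpr ⟨hk1, hkT⟩)]
        rw [hval]
        apply HasDerivAt.fun_sum
        intro k' hk'
        by_cases hkk : k' = k
        · subst hkk
          rw [if_pos rfl]
          have hfeq : (fun t => ∫ s in (0:ℝ)..(Function.update u k' t k'), f k' s)
              = fun t => ∫ s in (0:ℝ)..t, f k' s := by
            funext t
            rw [Function.update_self]
          rw [hfeq]
          obtain ⟨hk1', hkT'⟩ := Finset.mem_Icc.mp hk'
          exact intervalIntegral.integral_hasDerivAt_right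
            ((hf k' hk1' hkT').intervalIntegrable _ _)
            ((hf k' hk1' hkT').stronglyMeasurableAtFilter _ _)
            (hf k' hk1' hkT').continuousAt
        · rw [if_neg hkk]
          have hfeq : (fun t => ∫ s in (0:ℝ)..(Function.update u k t k'), f k' s)
              = fun _ => ∫ s in (0:ℝ)..(u k'), f k' s := by
            funext t
            rw [Function.update_of_ne hkk]
          rw [hfeq]
          exact hasDerivAt_const _ _
      have := hsum1.add (hsum2.const_mul lam)
      rw [hgdef]
      simp only [En]
      exact this
    have hzero := hloc.hasDerivAt_eq_zero hD
    rw [hXdef, hYdef] at hzero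
    linarith
  -- conclusion
  refine ⟨u, ⟨hu0, huT1, heqn⟩, ?_⟩
  by_contra hcon
  rw [Nontrivial'] at hcon
  push_neg at hcon
  obtain ⟨k0, hk01, hk0T, hfk0⟩ := hf0
  have huk0 : u k0 = 0 := hcon k0 hk01 hk0T
  have huk0p : u (k0 + 1) = 0 := by
    by_cases h : k0 = T
    · rw [show k0 + 1 = T + 1 by omega]
      exact huT1
    · exact hcon (k0 + 1) (by omega) (by omega)
  have huk0m : u (k0 - 1) = 0 := by
    by_cases h : k0 = 1
    · rw [show k0 - 1 = 0 by omega]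
      exact hu0
    · exact hcon (k0 - 1) (by omega) (by omega)
  have heqk0 := heqn k0 hk01 hk0T
  rw [huk0, huk0p, huk0m] at heqk0
  simp only [sub_zero, sub_self, mul_zero, zero_sub, neg_zero, zero_mul, abs_zero] at heqk0
  have : f k0 0 = 0 := by
    rcases mul_eq_zero.mp heqk0.symm with h | h
    · exact absurd h (ne_of_gt hlam)
    · exact h
  exact hfk0 this
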